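/- arXiv:2507.23547 — 5 statements merged into one kernel-verified Lean document; each statement's English description precedes it below -/
import Mathlib

section
/- Let M_f be an n×n complex matrix, decomposed as M_f = H₁ + iH₂ with H₁ = (M_f + M_fᴴ)/2 and H₂ = (M_f − M_fᴴ)/(2i). If V_f : ℝ → ℂⁿ solves dV_f/dt = M_f V_f, then the warped phase transformation W(t, p) := e^{−p} V_f(t) satisfies the convection equation ∂_t W = −H₁ ∂_p W + iH₂ W for all t ∈ ℝ and p ∈ ℝ. -/
open scoped Matrix

/-- If `V_f` solves `dV_f/dt = M_f V_f` with `M_f = H₁ + iH₂` its Hermitian/anti-Hermitian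
decomposition, then the warped phase transformation `W(t,p) = e^{−p} V_f(t)` satisfies
`∂_t W = −H₁ ∂_p W + iH₂ W`, where `∂_p W(t,p) = −e^{−p} V_f(t)`. -/
theorem warped_phase_transformation_convection {n : ℕ}
    (Mf H1 H2 : Matrix (Fin n) (Fin n) ℂ)
    (hH1 : H1 = (2 : ℂ)⁻¹ • (Mf + Mfᴴ))
    (hH2 : H2 = (2 * Complex.I)⁻¹ • (Mf - Mfᴴ))
    (Vf : ℝ → (Fin n → ℂ))
    (hode : ∀ t : ℝ, HasDerivAt Vf (Mf.mulVec (Vf t)) t)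
    (W : ℝ → ℝ → (Fin n → ℂ))
    (hW : ∀ t p : ℝ, W t p = Real.exp (-p) • Vf t) :
    ∀ t p : ℝ,
      HasDerivAt (fun q => W t q) (-(Real.exp (-p) • Vf t)) p ∧
      HasDerivAt (fun s => W s p)
        (-(H1.mulVec (-(Real.exp (-p) • Vf t))) + Complex.I • H2.mulVec (W t p)) t := by
  have hM : Mf = H1 + Complex.I • H2 := by
    subst hH1 hH2
    ext i j
    simp only [Matrix.add_apply, Matrix.smul_apply, Matrix.sub_apply, smul_eq_mul]
    have hI := Complex.I_ne_zero
    field_simp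
    ring
  intro t p
  constructor
  · have h1 : HasDerivAt (fun q : ℝ => Real.exp (-q)) (-Real.exp (-p)) p := by
      simpa [Function.comp_def] using (Real.hasDerivAt_exp (-p)).comp p (hasDerivAt_neg p)
    have h2 := h1.smul_const (Vf t)
    rw [neg_smul] at h2
    have hfun : (fun q => W t q) = fun q => Real.exp (-q) • Vf t := funext (hW t)
    rw [hfun]; exact h2
  · have h2 : HasDerivAt (fun s => Real.exp (-p) • Vf s)
        (Real.exp (-p) • Mf.mulVec (Vf t)) t := (hode t).const_smul (Real.exp (-p))
    have hfun : (fun s => W s p) = fun s => Real.exp (-p) • Vf s := by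
      funext s; exact hW s p
    rw [hfun, hW t p]
    have hsm : ∀ v : Fin n → ℂ, Real.exp (-p) • v = (Real.exp (-p) : ℂ) • v := by
      intro v; funext i; simp [Complex.real_smul]
    have heq : Real.exp (-p) • Mf.mulVec (Vf t) =
        -(H1.mulVec (-(Real.exp (-p) • Vf t))) +
          Complex.I • H2.mulVec (Real.exp (-p) • Vf t) := by
      rw [hsm, hsm, Matrix.mulVec_neg, neg_neg, Matrix.mulVec_smul, Matrix.mulVec_smul,
        hM, Matrix.add_mulVec, Matrix.smul_mulVec, smul_add, smul_comm]
    rw [heq] at h2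
    exact h2
end

section
/- Let γ > 0, T > 0, and N ≥ 1. Let M_D be the 2N×2N block-diagonal matrix diag(0_N, −γ I_N) and let H₁ be the 4N×4N Hermitian matrix (1/2)[[2M_D, I_{2N}/T],[I_{2N}/T, 0]]. Then every eigenvalue λ of H₁ satisfies λ ≤ 1/(2T), and 1/(2T) is an eigenvalue of H₁; consequently the recovery threshold p^◇ = max{λ_max(H₁)T, 0} equals 1/2. -/
open scoped Matrix
open Sum

lemma eig_mem_aux {n : Type*} [Fintype n] [DecidableEq n] {A : Matrix n n ℂ}
    (hA : A.IsHermitian) {μ : ℝ} {v : n → ℂ} (hv : v ≠ 0)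
    (heq : A *ᵥ v = (μ : ℂ) • v) : ∃ i, hA.eigenvalues i = μ := by
  have hdet : (A - (μ : ℂ) • 1).det = 0 := by
    rw [← Matrix.exists_mulVec_eq_zero_iff]
    refine ⟨v, hv, ?_⟩
    rw [Matrix.sub_mulVec, heq, Matrix.smul_mulVec, Matrix.one_mulVec, sub_self]
  have hspec := hA.spectral_theorem
  set U : Matrix n n ℂ := (hA.eigenvectorUnitary : Matrix n n ℂ) with hUdef
  set D : Matrix n n ℂ := Matrix.diagonal (RCLike.ofReal ∘ hA.eigenvalues) with hDdef
  have hU : U * star U = 1 := Matrix.mem_unitaryGroup_iff.mp hA.eigenvectorUnitary.2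
  have hU' : star U * U = 1 := Matrix.mem_unitaryGroup_iff'.mp hA.eigenvectorUnitary.2
  have hfact : A - (μ : ℂ) • 1 = U * (D - (μ : ℂ) • 1) * star U := by
    rw [Unitary.conjStarAlgAut_apply] at hspec
    rw [Matrix.mul_sub, Matrix.sub_mul, ← hspec]
    congr 1
    rw [Matrix.mul_smul, Matrix.smul_mul, Matrix.mul_one, hU]
  rw [hfact, Matrix.det_mul, Matrix.det_mul, mul_comm, ← mul_assoc, ← Matrix.det_mul, hU'] at hdet
  have hDdiag : D - (μ : ℂ) • 1 = Matrix.diagonal fun i => (hA.eigenvalues i : ℂ) - μ := by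
    rw [hDdef, Matrix.smul_one_eq_diagonal, Matrix.diagonal_sub]
    rfl
  rw [hDdiag, Matrix.det_diagonal, Matrix.det_one, one_mul] at hdet
  obtain ⟨i, -, hi⟩ := Finset.prod_eq_zero_iff.mp hdet
  exact ⟨i, by exact_mod_cast sub_eq_zero.mp hi⟩

lemma eig_le_aux {N : ℕ} {γ T : ℝ} (hγ : 0 < γ) (hT : 0 < T)
    {H1 : Matrix ((Fin N ⊕ Fin N) ⊕ (Fin N ⊕ Fin N)) ((Fin N ⊕ Fin N) ⊕ (Fin N ⊕ Fin N)) ℂ}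
    (hH1 : H1 = (2:ℂ)⁻¹ • Matrix.fromBlocks
      ((2:ℂ) • (Matrix.fromBlocks 0 0 0 ((-(γ:ℂ)) • 1) : Matrix (Fin N ⊕ Fin N) (Fin N ⊕ Fin N) ℂ))
      ((T:ℂ)⁻¹ • 1) ((T:ℂ)⁻¹ • 1) 0)
    {lam : ℝ} {v : ((Fin N ⊕ Fin N) ⊕ (Fin N ⊕ Fin N)) → ℂ} (hv : v ≠ 0)
    (heq : H1 *ᵥ v = (lam:ℂ) • v) : lam ≤ 1/(2*T) := by
  by_contra hlt
  push_neg at hlt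
  have hc : (0:ℝ) < 1/(2*T) := by positivity
  have hlam0 : (0:ℝ) < lam := hc.trans hlt
  have hcast : ((1/(2*T) : ℝ) : ℂ) = 2⁻¹ * (T:ℂ)⁻¹ := by push_cast; ring
  apply hv
  funext x
  have key : ∀ j : Fin N, v (inl (inl j)) = 0 ∧ v (inr (inl j)) = 0 ∧
      v (inl (inr j)) = 0 ∧ v (inr (inr j)) = 0 := by
    intro j
    have h1 := congrFun heq (inl (inl j))
    have h2 := congrFun heq (inl (inr j))
    have h3 := congrFun heq (inr (inl j))
    have h4 := congrFun heq (inr (inr j))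
    simp only [hH1] at h1 h2 h3 h4
    simp [Matrix.mulVec, dotProduct, Fintype.sum_sum_type, Matrix.fromBlocks,
      Matrix.one_apply, mul_ite, ite_mul, Finset.sum_ite_eq, Finset.sum_ite_eq'] at h1 h2 h3 h4
    -- pair 1 : u = v (inl (inl j)), w = v (inr (inl j))
    have e1 : v (inl (inl j)) * ((lam:ℂ)^2 - (2⁻¹ * (T:ℂ)⁻¹)^2) = 0 := by
      linear_combination (-(lam:ℂ)) * h1 - (2⁻¹ * (T:ℂ)⁻¹) * h3
    have ne1 : ((lam:ℂ)^2 - (2⁻¹ * (T:ℂ)⁻¹)^2) ≠ 0 := by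
      have : ((lam:ℂ)^2 - (2⁻¹ * (T:ℂ)⁻¹)^2) = ((lam^2 - (1/(2*T))^2 : ℝ) : ℂ) := by
        push_cast; ring
      rw [this]
      exact_mod_cast ne_of_gt (by nlinarith : (0:ℝ) < lam^2 - (1/(2*T))^2)
    have hu1 : v (inl (inl j)) = 0 := by
      rcases mul_eq_zero.mp e1 with h | h
      · exact h
      · exact absurd h ne1
    have hw1 : v (inr (inl j)) = 0 := by
      have := h3
      rw [hu1] at this
      have hl : (lam:ℂ) ≠ 0 := by exact_mod_cast ne_of_gt hlam0
      field_simp at this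
      simpa [hl] using this.symm
    -- pair 2 : u = v (inl (inr j)), w = v (inr (inr j))
    have e2 : v (inl (inr j)) * ((lam:ℂ)^2 + (γ:ℂ)*lam - (2⁻¹ * (T:ℂ)⁻¹)^2) = 0 := by
      linear_combination (-(lam:ℂ)) * h2 - (2⁻¹ * (T:ℂ)⁻¹) * h4
    have ne2 : ((lam:ℂ)^2 + (γ:ℂ)*lam - (2⁻¹ * (T:ℂ)⁻¹)^2) ≠ 0 := by
      have : ((lam:ℂ)^2 + (γ:ℂ)*lam - (2⁻¹ * (T:ℂ)⁻¹)^2)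
          = ((lam^2 + γ*lam - (1/(2*T))^2 : ℝ) : ℂ) := by push_cast; ring
      rw [this]
      exact_mod_cast ne_of_gt (by nlinarith : (0:ℝ) < lam^2 + γ*lam - (1/(2*T))^2)
    have hu2 : v (inl (inr j)) = 0 := by
      rcases mul_eq_zero.mp e2 with h | h
      · exact h
      · exact absurd h ne2
    have hw2 : v (inr (inr j)) = 0 := by
      have := h4
      rw [hu2] at this
      have hl : (lam:ℂ) ≠ 0 := by exact_mod_cast ne_of_gt hlam0
      field_simp at this
      simpa [hl] using this.symm
    exact ⟨hu1, hw1, hu2, hw2⟩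
  rcases x with (j | j) | (j | j)
  · exact (key j).1
  · exact (key j).2.2.1
  · exact (key j).2.1
  · exact (key j).2.2.2

/-- For `H₁ = (1/2)[[2M_D, I/T],[I/T, 0]]` with `M_D = diag(0, −γI)`, `γ, T > 0`: all
eigenvalues of `H₁` are `≤ 1/(2T)`, the value `1/(2T)` is attained, and the recovery
threshold `p^◇ = max{λ_max(H₁) T, 0}` equals `1/2`. -/
theorem recovery_threshold_eq_half {N : ℕ} (hN : 1 ≤ N) (γ T : ℝ) (hγ : 0 < γ) (hT : 0 < T)
    (MD : Matrix (Fin N ⊕ Fin N) (Fin N ⊕ Fin N) ℂ)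
    (hMD : MD = Matrix.fromBlocks 0 0 0 ((-(γ : ℂ)) • 1))
    (H1 : Matrix ((Fin N ⊕ Fin N) ⊕ (Fin N ⊕ Fin N)) ((Fin N ⊕ Fin N) ⊕ (Fin N ⊕ Fin N)) ℂ)
    (hH1 : H1 = (2 : ℂ)⁻¹ • Matrix.fromBlocks ((2 : ℂ) • MD) ((T : ℂ)⁻¹ • 1) ((T : ℂ)⁻¹ • 1) 0)
    (hHerm : H1.IsHermitian) :
    (∀ i, hHerm.eigenvalues i ≤ 1 / (2 * T)) ∧
    (∃ i, hHerm.eigenvalues i = 1 / (2 * T)) ∧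
    max ((⨆ i, hHerm.eigenvalues i) * T) 0 = 1 / 2 := by
  subst hMD
  have hbound : ∀ i, hHerm.eigenvalues i ≤ 1 / (2 * T) := by
    intro i
    have hev := hHerm.mulVec_eigenvectorBasis i
    have hvne : (⇑(hHerm.eigenvectorBasis i) : _ → ℂ) ≠ 0 :=
      fun h => hHerm.eigenvectorBasis.orthonormal.ne_zero i (by ext k; simpa using congrFun h k)
    exact eig_le_aux hγ hT hH1 hvne (by simpa using hev)
  -- explicit eigenvector for 1/(2T)
  have hne : Nonempty (Fin N) := ⟨⟨0, hN⟩⟩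
  set w : ((Fin N ⊕ Fin N) ⊕ (Fin N ⊕ Fin N)) → ℂ :=
    Sum.elim (Sum.elim (fun _ => 1) (fun _ => 0)) (Sum.elim (fun _ => 1) (fun _ => 0)) with hw
  have hwne : w ≠ 0 := by
    intro h
    have := congrFun h (Sum.inl (Sum.inl ⟨0, hN⟩))
    simp [hw] at this
  have hweq : H1 *ᵥ w = ((1/(2*T) : ℝ) : ℂ) • w := by
    have hT0 : (T:ℂ) ≠ 0 := by exact_mod_cast ne_of_gt hT
    funext x
    rcases x with (j | j) | (j | j) <;>
    · simp [hH1, hw, Matrix.mulVec, dotProduct, Fintype.sum_sum_type, Matrix.fromBlocks,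
        Matrix.one_apply, mul_ite, ite_mul, Finset.sum_ite_eq, Finset.sum_ite_eq']
      try ring
  have hex : ∃ i, hHerm.eigenvalues i = 1/(2*T) := eig_mem_aux hHerm hwne hweq
  refine ⟨hbound, hex, ?_⟩
  obtain ⟨i0, hi0⟩ := hex
  have hbdd : BddAbove (Set.range hHerm.eigenvalues) := (Set.finite_range _).bddAbove
  have hsup : (⨆ i, hHerm.eigenvalues i) = 1/(2*T) :=
    le_antisymm (ciSup_le hbound) (hi0 ▸ le_ciSup hbdd i0)
  rw [hsup]
  have : 1/(2*T) * T = 1/2 := by field_simp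
  rw [this]
  exact max_eq_left (by norm_num)
end

section
/- Let λ, μ ∈ ℝ, v₀ ∈ ℂ, and let ψ : ℝ → ℂ be differentiable with ψ(q) = e^{−q} for all q ≥ 0. Define w(t, p) = ψ(p − λt) e^{iμt} v₀. Then w solves the transport equation ∂_t w = −λ ∂_p w + iμ w with initial data w(0, p) = ψ(p) v₀; and for every T ≥ 0 and every p ≥ max{λT, 0}, the original solution v(T) = e^{(λ+iμ)T} v₀ of dv/dt = (λ + iμ)v, v(0) = v₀, is recovered as v(T) = e^{p} w(T, p). -/
/-- The scalar model of Schrödingerization: `w(t,p) = ψ(p − λt) e^{iμt} v₀` (with `ψ` a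
differentiable extension of `e^{−p}` from `p ≥ 0`) solves the transport equation
`∂_t w = −λ ∂_p w + iμ w` with data `w(0,p) = ψ(p) v₀`, and for `T ≥ 0`, `p ≥ max{λT, 0}`
the solution `v(T) = e^{(λ+iμ)T} v₀` of `dv/dt = (λ+iμ)v` is recovered as `e^p w(T,p)`. -/
theorem scalar_schrodingerization_recovery (lam mu : ℝ) (v0 : ℂ)
    (ψ : ℝ → ℂ) (hψdiff : Differentiable ℝ ψ)
    (hψ : ∀ q : ℝ, 0 ≤ q → ψ q = Real.exp (-q))
    (w : ℝ → ℝ → ℂ)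
    (hw : ∀ t p : ℝ, w t p = ψ (p - lam * t) * Complex.exp (Complex.I * mu * t) * v0) :
    (∀ p : ℝ, w 0 p = ψ p * v0) ∧
    (∀ t p : ℝ, HasDerivAt (fun s => w s p)
      ((-(lam : ℂ)) * deriv (fun q => w t q) p + Complex.I * mu * w t p) t) ∧
    (∀ T : ℝ, 0 ≤ T → ∀ p : ℝ, max (lam * T) 0 ≤ p →
      Complex.exp (((lam : ℂ) + Complex.I * mu) * T) * v0 = Real.exp p * w T p) := by
  refine ⟨fun p => by simp [hw 0 p], ?_, ?_⟩
  · intro t p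
    have heq : (fun q => w t q)
        = fun q => ψ (q - lam * t) * Complex.exp (Complex.I * mu * t) * v0 :=
      funext fun q => hw t q
    have heqt : (fun s => w s p)
        = fun s => ψ (p - lam * s) * Complex.exp (Complex.I * mu * s) * v0 :=
      funext fun s => hw s p
    -- spatial derivative
    have hspace : HasDerivAt (fun q => w t q)
        (deriv ψ (p - lam * t) * Complex.exp (Complex.I * mu * t) * v0) p := by
      rw [heq]
      have h1 : HasDerivAt (fun q : ℝ => q - lam * t) 1 p :=
        (hasDerivAt_id p).sub_const _
      have h2 : HasDerivAt (fun q : ℝ => ψ (q - lam * t))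
          (deriv ψ (p - lam * t)) p := by
        have h3 := ((hψdiff (p - lam * t)).hasDerivAt.scomp p h1)
        simp at h3
        exact h3
      exact (h2.mul_const (Complex.exp (Complex.I * mu * t))).mul_const v0
    have hderiv : deriv (fun q => w t q) p
        = deriv ψ (p - lam * t) * Complex.exp (Complex.I * mu * t) * v0 :=
      hspace.deriv
    -- time derivative
    have ht1 : HasDerivAt (fun s : ℝ => p - lam * s) (-lam) t := by
      simpa using ((hasDerivAt_id t).const_mul lam).const_sub p
    have hψt : HasDerivAt (fun s : ℝ => ψ (p - lam * s))
        ((-(lam : ℂ)) * deriv ψ (p - lam * t)) t := by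
      have := (hψdiff (p - lam * t)).hasDerivAt.scomp t ht1
      simp [smul_eq_mul, mul_comm] at this
      rw [show ((-(lam : ℂ)) * deriv ψ (p - lam * t)) = -((lam : ℂ) * deriv ψ (p - lam * t)) by ring]
      exact this
    have hexp : HasDerivAt (fun s : ℝ => Complex.exp (Complex.I * mu * s))
        (Complex.exp (Complex.I * mu * t) * (Complex.I * mu)) t := by
      have hin : HasDerivAt (fun s : ℝ => Complex.I * mu * (s : ℂ)) (Complex.I * mu) t := by
        simpa using ((hasDerivAt_id t).ofReal_comp.const_mul (Complex.I * (mu : ℂ)))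
      simpa using hin.cexp
    have := (hψt.mul hexp).mul_const v0
    rw [heqt]
    refine this.congr_deriv ?_
    rw [hderiv, hw t p]
    ring
  · intro T hT p hp
    have hpl : 0 ≤ p - lam * T := sub_nonneg.mpr (le_trans (le_max_left _ _) hp)
    rw [hw T p, hψ _ hpl]
    rw [Complex.ofReal_exp, Complex.ofReal_exp, Complex.ofReal_neg, ← mul_assoc,
      ← mul_assoc, ← Complex.exp_add, ← Complex.exp_add]
    congr 2
    push_cast
    ring
end

section
/- Let L be an N×N Hermitian positive semidefinite complex matrix, k > 0 real, and v ≠ 0 an eigenvector of L with L v = μ² v (μ² ≥ 0). Then L + ik²I is invertible, the complex-shifted preconditioned matrix (L + ik²I)⁻¹(L − k²I) satisfies (L + ik²I)⁻¹(L − k²I) v = ((μ² − k²)/(μ² + ik²)) v, and the modulus of this eigenvalue satisfies |(μ² − k²)/(μ² + ik²)| ≤ 1. -/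
open scoped Matrix ComplexOrder

/-- For Hermitian positive semidefinite `L`, `k > 0` and an eigenvector `L v = μ² v`,
the complex-shifted matrix `L + ik²I` is invertible, the preconditioned matrix
`(L + ik²I)⁻¹(L − k²I)` satisfies the eigenvalue relation with eigenvalue
`(μ² − k²)/(μ² + ik²)`, whose modulus is at most `1`. -/
theorem complex_shift_preconditioner_eigenvalue {N : ℕ}
    (L : Matrix (Fin N) (Fin N) ℂ) (hL : L.PosSemidef)
    (k : ℝ) (hk : 0 < k) (v : Fin N → ℂ) (hv : v ≠ 0)
    (musq : ℝ) (hmusq : 0 ≤ musq) (heig : L.mulVec v = (musq : ℂ) • v) :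
    IsUnit (L + (Complex.I * (k : ℂ) ^ 2) • 1) ∧
    ((L + (Complex.I * (k : ℂ) ^ 2) • 1)⁻¹ * (L - ((k : ℂ) ^ 2) • 1)).mulVec v
      = (((musq : ℂ) - (k : ℂ) ^ 2) / ((musq : ℂ) + Complex.I * (k : ℂ) ^ 2)) • v ∧
    ‖((musq : ℂ) - (k : ℂ) ^ 2) / ((musq : ℂ) + Complex.I * (k : ℂ) ^ 2)‖ ≤ 1 := by
  set A : Matrix (Fin N) (Fin N) ℂ := L + (Complex.I * (k : ℂ) ^ 2) • 1 with hA
  have hk2 : (0:ℝ) < k ^ 2 := by positivity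
  have hkc : ((k:ℂ))^2 = ((k^2 : ℝ) : ℂ) := by push_cast; ring
  have hker : ∀ w : Fin N → ℂ, A.mulVec w = 0 → w = 0 := by
    intro w hw0
    have hw : L.mulVec w + (Complex.I * (k : ℂ) ^ 2) • w = 0 := by
      simpa [hA, Matrix.add_mulVec, Matrix.smul_mulVec, Matrix.one_mulVec] using hw0
    have hLw : L.mulVec w = -((Complex.I * (k : ℂ) ^ 2) • w) :=
      eq_neg_of_add_eq_zero_left hw
    have hpos := hL.dotProduct_mulVec_nonneg w
    rw [hLw] at hpos
    have hdot : dotProduct (star w) ((Complex.I * (k : ℂ) ^ 2) • w)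
        = Complex.I * (k : ℂ) ^ 2 * dotProduct (star w) w := by
      simp [dotProduct_smul, smul_eq_mul]
    rw [dotProduct_neg, hdot] at hpos
    have him : (-(Complex.I * (k : ℂ) ^ 2 * dotProduct (star w) w)).im = 0 := by
      exact hpos.2.symm
    have hnsq : dotProduct (star w) w = (∑ i, Complex.normSq (w i) : ℝ) := by
      rw [dotProduct]
      push_cast [Complex.normSq_eq_conj_mul_self]
      rfl
    rw [hnsq, hkc] at him
    simp only [Complex.neg_im, Complex.mul_im, Complex.mul_re, Complex.I_re, Complex.I_im,
      Complex.ofReal_re, Complex.ofReal_im, neg_eq_zero] at him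
    have hsum : (∑ i, Complex.normSq (w i) : ℝ) = 0 := by nlinarith
    funext i
    have hi : Complex.normSq (w i) = 0 := by
      have hle : Complex.normSq (w i) ≤ ∑ j, Complex.normSq (w j) :=
        Finset.single_le_sum (fun j _ => Complex.normSq_nonneg (w j)) (Finset.mem_univ i)
      nlinarith [Complex.normSq_nonneg (w i)]
    simpa using Complex.normSq_eq_zero.mp hi
  have hinj : Function.Injective A.mulVec := by
    intro x y hxy
    have h0 : A.mulVec (x - y) = 0 := by
      rw [Matrix.mulVec_sub, hxy, sub_self]
    exact sub_eq_zero.mp (hker _ h0)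
  have hUnit : IsUnit A := Matrix.mulVec_injective_iff_isUnit.mp hinj
  set c : ℂ := (musq : ℂ) + Complex.I * (k : ℂ) ^ 2 with hc
  have hcim : c.im = k ^ 2 := by
    rw [hc, hkc]
    simp [Complex.add_im, Complex.mul_im, -Complex.ofReal_pow]
  have hcne : c ≠ 0 := by
    intro h
    rw [h] at hcim
    simp at hcim
    nlinarith
  have hAv : A.mulVec v = c • v := by
    rw [hA, Matrix.add_mulVec, heig, Matrix.smul_mulVec, Matrix.one_mulVec, hc, add_smul]
  have hAinv : A⁻¹.mulVec v = c⁻¹ • v := by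
    apply hinj
    rw [Matrix.mulVec_mulVec, Matrix.mul_nonsing_inv _ ((Matrix.isUnit_iff_isUnit_det A).mp hUnit),
      Matrix.one_mulVec, Matrix.mulVec_smul, hAv, smul_smul, inv_mul_cancel₀ hcne, one_smul]
  have hBv : (L - ((k : ℂ) ^ 2) • 1).mulVec v = ((musq : ℂ) - (k : ℂ) ^ 2) • v := by
    rw [Matrix.sub_mulVec, heig, Matrix.smul_mulVec, Matrix.one_mulVec, sub_smul]
  refine ⟨hUnit, ?_, ?_⟩
  · rw [← Matrix.mulVec_mulVec, hBv, Matrix.mulVec_smul, hAinv, smul_smul, div_eq_mul_inv]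
  · rw [norm_div, div_le_one (by simpa [hc] using (norm_pos_iff.mpr hcne))]
    have h1 : ‖((musq : ℂ) - (k : ℂ) ^ 2)‖ = |musq - k ^ 2| := by
      rw [show ((musq : ℂ) - (k : ℂ) ^ 2) = ((musq - k ^ 2 : ℝ) : ℂ) by push_cast; ring,
        Complex.norm_real, Real.norm_eq_abs]
    have h2 : ‖((musq : ℂ) + Complex.I * (k : ℂ) ^ 2)‖
        = Real.sqrt (musq ^ 2 + (k ^ 2) ^ 2) := by
      rw [hkc, Complex.norm_def, Complex.normSq_apply]
      congr 1
      simp [Complex.add_re, Complex.add_im, Complex.mul_re, Complex.mul_im, -Complex.ofReal_pow]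
      ring
    rw [h1, h2]
    rw [show |musq - k^2| = Real.sqrt ((musq - k^2)^2) by rw [Real.sqrt_sq_eq_abs]]
    apply Real.sqrt_le_sqrt
    nlinarith
end

section
/- The function ψ : ℝ → ℝ defined by ψ(p) = (−3 + 3e^{−1})p³ + (−5 + 4e^{−1})p² − p + 1 for p ∈ (−1, 0) and ψ(p) = e^{−|p|} otherwise is continuously differentiable on all of ℝ; in particular the piecewise definitions match in value and first derivative at p = −1 (where ψ(−1) = e^{−1}, ψ'(−1) = e^{−1}) and at p = 0 (where ψ(0) = 1, ψ'(0) = −1). -/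
open Set Real

private noncomputable def ψa : ℝ := -3 + 3 * Real.exp (-1)
private noncomputable def ψb : ℝ := -5 + 4 * Real.exp (-1)

private noncomputable def ψcubic (p : ℝ) : ℝ := ψa * p ^ 3 + ψb * p ^ 2 - p + 1
private noncomputable def ψcubic' (p : ℝ) : ℝ := 3 * ψa * p ^ 2 + 2 * ψb * p - 1

private noncomputable def ψg (p : ℝ) : ℝ :=
  if p ≤ -1 then Real.exp p else if p ≤ 0 then ψcubic' p else -Real.exp (-p)

private lemma hasDerivAt_ψcubic (p : ℝ) : HasDerivAt ψcubic (ψcubic' p) p := by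
  have h := ((((hasDerivAt_pow 3 p).const_mul ψa).add
      ((hasDerivAt_pow 2 p).const_mul ψb)).sub (hasDerivAt_id p)).add_const 1
  unfold ψcubic ψcubic'
  exact h.congr_deriv (by push_cast; ring)

private lemma hasDerivAt_expneg (p : ℝ) :
    HasDerivAt (fun x : ℝ => Real.exp (-x)) (-Real.exp (-p)) p := by
  exact ((Real.hasDerivAt_exp (-p)).comp p (hasDerivAt_neg p)).congr_deriv (by ring)

private lemma ψcubic_m1 : ψcubic (-1) = Real.exp (-1) := by
  simp [ψcubic, ψa, ψb]; ring
private lemma ψcubic'_m1 : ψcubic' (-1) = Real.exp (-1) := by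
  simp [ψcubic', ψa, ψb]; ring
private lemma ψcubic_0 : ψcubic 0 = 1 := by simp [ψcubic]
private lemma ψcubic'_0 : ψcubic' 0 = -1 := by simp [ψcubic']

private lemma continuous_ψg : Continuous ψg := by
  have hc : Continuous ψcubic' := by
    unfold ψcubic'; fun_prop
  have h2 : Continuous fun p : ℝ => if p ≤ 0 then ψcubic' p else -Real.exp (-p) := by
    apply Continuous.if_le hc (by fun_prop) continuous_id continuous_const
    intro x hx
    simp only [id_eq] at hx
    subst hx
    rw [ψcubic'_0]; simp
  apply Continuous.if_le Real.continuous_exp h2 continuous_id continuous_const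
  intro x hx
  simp only [id_eq] at hx
  subst hx
  simp [ψcubic'_m1]

/-- The smoothed extension `ψ` of `e^{−|p|}` (cubic polynomial on `(−1,0)`, `e^{−|p|}`
elsewhere) is continuously differentiable on `ℝ`; in particular the pieces match in value
and first derivative at `p = −1` and `p = 0`. -/
theorem smoothed_profile_C1 (ψ : ℝ → ℝ)
    (hmid : ∀ p ∈ Set.Ioo (-1 : ℝ) 0, ψ p =
      (-3 + 3 * Real.exp (-1)) * p ^ 3 + (-5 + 4 * Real.exp (-1)) * p ^ 2 - p + 1)
    (hout : ∀ p : ℝ, p ∉ Set.Ioo (-1 : ℝ) 0 → ψ p = Real.exp (-|p|)) :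
    ContDiff ℝ 1 ψ ∧
    ψ (-1) = Real.exp (-1) ∧ deriv ψ (-1) = Real.exp (-1) ∧
    ψ 0 = 1 ∧ deriv ψ 0 = -1 := by
  have hmid' : ∀ p ∈ Set.Ioo (-1 : ℝ) 0, ψ p = ψcubic p := by
    intro p hp; rw [hmid p hp]; simp [ψcubic, ψa, ψb]
  -- values on the exp pieces
  have hleft : ∀ p : ℝ, p ≤ -1 → ψ p = Real.exp p := by
    intro p hp
    rw [hout p (by simp [Set.mem_Ioo]; intro h; linarith)]
    rw [abs_of_nonpos (by linarith)]; ring_nf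
  have hright : ∀ p : ℝ, 0 ≤ p → ψ p = Real.exp (-p) := by
    intro p hp
    rw [hout p (by simp [Set.mem_Ioo]; intro h; linarith)]
    rw [abs_of_nonneg hp]
  have hψm1 : ψ (-1) = Real.exp (-1) := hleft _ le_rfl
  have hψ0 : ψ 0 = 1 := by rw [hright 0 le_rfl]; simp
  -- ψ agrees with the cubic on Ico (-1) 0 and Ioc (-1) 0
  have hIco : ∀ x ∈ Set.Ico (-1 : ℝ) 0, ψ x = ψcubic x := by
    intro x hx
    rcases eq_or_lt_of_le hx.1 with h | h
    · rw [← h, hψm1, ψcubic_m1]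
    · exact hmid' x ⟨h, hx.2⟩
  have hIoc : ∀ x ∈ Set.Ioc (-1 : ℝ) 0, ψ x = ψcubic x := by
    intro x hx
    rcases eq_or_lt_of_le hx.2 with h | h
    · rw [h, hψ0, ψcubic_0]
    · exact hmid' x ⟨hx.1, h⟩
  -- the key derivative claim
  have hd : ∀ p : ℝ, HasDerivAt ψ (ψg p) p := by
    intro p
    rcases lt_trichotomy p (-1) with hp | hp | hp
    · have hg : ψg p = Real.exp p := by simp [ψg, hp.le]
      rw [hg]
      refine (Real.hasDerivAt_exp p).congr_of_eventuallyEq ?_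
      filter_upwards [Iio_mem_nhds hp] with x hx
      exact hleft x (le_of_lt hx)
    · subst hp
      have hg : ψg (-1) = Real.exp (-1) := by simp [ψg]
      rw [hg]
      have hL : HasDerivWithinAt ψ (Real.exp (-1)) (Set.Iic (-1)) (-1) := by
        refine ((Real.hasDerivAt_exp (-1)).hasDerivWithinAt).congr ?_ hψm1
        intro x hx; exact hleft x hx
      have hR : HasDerivWithinAt ψ (Real.exp (-1)) (Set.Ici (-1)) (-1) := by
        have h1 : HasDerivWithinAt ψcubic (Real.exp (-1)) (Set.Ico (-1) 0) (-1) := by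
          rw [← ψcubic'_m1]; exact (hasDerivAt_ψcubic (-1)).hasDerivWithinAt
        have h2 : HasDerivWithinAt ψ (Real.exp (-1)) (Set.Ico (-1) 0) (-1) :=
          h1.congr hIco (by rw [hψm1, ψcubic_m1])
        exact h2.mono_of_mem_nhdsWithin
          (Ico_mem_nhdsGE_of_mem ⟨le_rfl, by norm_num⟩)
      have := hL.union hR
      rwa [Set.Iic_union_Ici, hasDerivWithinAt_univ] at this
    · rcases lt_trichotomy p 0 with hp0 | hp0 | hp0
      · have hg : ψg p = ψcubic' p := by simp [ψg, not_le.mpr hp, hp0.le]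
        rw [hg]
        refine (hasDerivAt_ψcubic p).congr_of_eventuallyEq ?_
        filter_upwards [Ioo_mem_nhds hp hp0] with x hx
        exact hmid' x hx
      · subst hp0
        have hg : ψg 0 = -1 := by norm_num [ψg, ψcubic'_0]
        rw [hg]
        have hL : HasDerivWithinAt ψ (-1) (Set.Iic 0) 0 := by
          have h1 : HasDerivWithinAt ψcubic (-1) (Set.Ioc (-1) 0) 0 := by
            rw [← ψcubic'_0]; exact (hasDerivAt_ψcubic 0).hasDerivWithinAt
          have h2 : HasDerivWithinAt ψ (-1) (Set.Ioc (-1) 0) 0 :=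
            h1.congr hIoc (by rw [hψ0, ψcubic_0])
          exact h2.mono_of_mem_nhdsWithin
            (Ioc_mem_nhdsLE_of_mem ⟨by norm_num, le_rfl⟩)
        have hR : HasDerivWithinAt ψ (-1) (Set.Ici 0) 0 := by
          have h1 : HasDerivWithinAt (fun x : ℝ => Real.exp (-x)) (-1) (Set.Ici 0) 0 := by
            simpa using (hasDerivAt_expneg 0).hasDerivWithinAt
          refine h1.congr ?_ (by rw [hψ0]; simp)
          intro x hx; exact hright x hx
        have := hL.union hR
        rwa [Set.Iic_union_Ici, hasDerivWithinAt_univ] at this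
      · have hg : ψg p = -Real.exp (-p) := by
          simp [ψg, not_le.mpr (by linarith : ¬ (p ≤ -1) → True), not_le.mpr hp0]
          intro h; linarith
        rw [hg]
        refine (hasDerivAt_expneg p).congr_of_eventuallyEq ?_
        filter_upwards [Ioi_mem_nhds hp0] with x hx
        exact hright x (le_of_lt hx)
  have hderiv : deriv ψ = ψg := funext fun p => (hd p).deriv
  refine ⟨?_, hψm1, ?_, hψ0, ?_⟩
  · rw [contDiff_one_iff_deriv]
    exact ⟨fun p => (hd p).differentiableAt, hderiv ▸ continuous_ψg⟩
  · rw [hderiv]; simp [ψg]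
  · rw [hderiv]; norm_num [ψg, ψcubic'_0]
end
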